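/- Let 𝒵 be a finite state space, let Z be a jump path on 𝒵 with counting functions N_{jk}, and let R ∈ (0,∞) be a censoring time. Then for every t ≥ 0 and every state j ∈ 𝒵 the censored sojourn–transition identity holds: 1{Z(t) = j}·1{t < R} = 1{Z(0) = j} − 1{R ≤ t}·1{Z(R) = j} + Σ_{k ∈ 𝒵, k ≠ j} ( N_{kj}(min(t,R)) − N_{jk}(min(t,R)) ). -/
import Mathlib


/-- A jump path on a finite state space `𝒵`: a function `ℝ → 𝒵` (of interest on `[0,∞)`)
which is right-continuous for the discrete topology (i.e. locally constant to the right),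
admits left limits at every `t > 0` (i.e. is locally constant to the left, with value
`leftLim t`), and has only finitely many discontinuities in `(0,t]` for every `t > 0`. -/
structure JumpPath (𝒵 : Type*) [Fintype 𝒵] where
  toFun : ℝ → 𝒵
  leftLim : ℝ → 𝒵
  rightCont : ∀ t : ℝ, 0 ≤ t → ∃ δ > 0, ∀ s : ℝ, t ≤ s → s < t + δ → toFun s = toFun t
  leftLim_spec : ∀ t : ℝ, 0 < t → ∃ δ > 0, ∀ s : ℝ, t - δ < s → s < t → toFun s = leftLim t
  finiteJumps : ∀ t : ℝ, 0 < t → {s : ℝ | 0 < s ∧ s ≤ t ∧ leftLim s ≠ toFun s}.Finite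

/-- The counting function `N_{jk}(t) = #{s ∈ (0,t] : Z(s−) = j, Z(s) = k}` of a jump path. -/
noncomputable def JumpPath.countN {𝒵 : Type*} [Fintype 𝒵] (P : JumpPath 𝒵)
    (j k : 𝒵) (t : ℝ) : ℕ :=
  {s : ℝ | 0 < s ∧ s ≤ t ∧ P.leftLim s = j ∧ P.toFun s = k}.ncard

namespace JumpPath

variable {𝒵 : Type*} [Fintype 𝒵] [DecidableEq 𝒵] (P : JumpPath 𝒵)

lemma jumpSet_finite (u : ℝ) :
    {s : ℝ | 0 < s ∧ s ≤ u ∧ P.leftLim s ≠ P.toFun s}.Finite := by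
  rcases lt_or_ge 0 u with hu | hu
  · exact P.finiteJumps u hu
  · have : {s : ℝ | 0 < s ∧ s ≤ u ∧ P.leftLim s ≠ P.toFun s} = ∅ :=
      Set.eq_empty_of_forall_notMem fun s hs => hs.1.not_ge (hs.2.1.trans hu)
    rw [this]; exact Set.finite_empty

lemma const_of_noJump (a b : ℝ) (ha : 0 ≤ a)
    (h : ∀ s, a < s → s ≤ b → P.leftLim s = P.toFun s) :
    ∀ s, a ≤ s → s ≤ b → P.toFun s = P.toFun a := by
  intro s has hsb
  set T := {x : ℝ | x ∈ Set.Icc a s ∧ ∀ y, a ≤ y → y ≤ x → P.toFun y = P.toFun a} with hT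
  have haT : a ∈ T := ⟨⟨le_refl a, has⟩, fun y hy hy' => by rw [le_antisymm hy' hy]⟩
  have hbdd : BddAbove T := ⟨s, fun x hx => hx.1.2⟩
  have hne : T.Nonempty := ⟨a, haT⟩
  set c := sSup T with hc
  have hac : a ≤ c := le_csSup hbdd haT
  have hcs : c ≤ s := csSup_le hne fun x hx => hx.1.2
  have hlt : ∀ y, a ≤ y → y < c → P.toFun y = P.toFun a := by
    intro y hy hyc
    obtain ⟨x, hxT, hyx⟩ := exists_lt_of_lt_csSup hne hyc
    exact hxT.2 y hy hyx.le
  have hcval : P.toFun c = P.toFun a := by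
    rcases eq_or_lt_of_le hac with h' | h'
    · rw [← h']
    · have hjump := h c h' (hcs.trans hsb)
      obtain ⟨δ, hδ, hδs⟩ := P.leftLim_spec c (ha.trans_lt h')
      obtain ⟨y, hy1, hy2⟩ :=
        exists_between (max_lt h' (by linarith : c - δ < c))
      have h1 : P.toFun y = P.leftLim c :=
        hδs y (lt_of_le_of_lt (le_max_right _ _) hy1) hy2
      have h2 : P.toFun y = P.toFun a :=
        hlt y (le_of_lt (lt_of_le_of_lt (le_max_left _ _) hy1)) hy2
      rw [← hjump, ← h1, h2]
  have hcT : c ∈ T := by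
    refine ⟨⟨hac, hcs⟩, fun y hy hyc => ?_⟩
    rcases eq_or_lt_of_le hyc with h' | h'
    · rw [h']; exact hcval
    · exact hlt y hy h'
  have hceq : c = s := by
    by_contra hcs'
    have hcs2 : c < s := lt_of_le_of_ne hcs hcs'
    obtain ⟨δ, hδ, hδs⟩ := P.rightCont c (ha.trans hac)
    set x := min s (c + δ/2) with hx
    have hcx : c < x := lt_min hcs2 (by linarith)
    have hxT : x ∈ T := by
      refine ⟨⟨hac.trans hcx.le, min_le_left _ _⟩, fun y hy hyx => ?_⟩
      rcases le_or_gt y c with h' | h'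
      · exact hcT.2 y hy h'
      · have hy2 : P.toFun y = P.toFun c :=
          hδs y h'.le (lt_of_le_of_lt (hyx.trans (min_le_right _ _)) (by linarith))
        rw [hy2, hcval]
    exact absurd (le_csSup hbdd hxT) (not_le.mpr hcx)
  rw [← hceq]; exact hcval

lemma leftLim_eq_of_noJump (a m : ℝ) (ha : 0 ≤ a) (ham : a < m)
    (h : ∀ s, a < s → s < m → P.leftLim s = P.toFun s) :
    P.leftLim m = P.toFun a := by
  obtain ⟨δ, hδ, hδs⟩ := P.leftLim_spec m (ha.trans_lt ham)
  obtain ⟨y, hy1, hy2⟩ := exists_between (max_lt ham (by linarith : m - δ < m))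
  have h1 : P.toFun y = P.leftLim m :=
    hδs y (lt_of_le_of_lt (le_max_right _ _) hy1) hy2
  have h2 : P.toFun y = P.toFun a :=
    P.const_of_noJump a y ha (fun s hs hsy => h s hs (lt_of_le_of_lt hsy hy2)) y
      (le_of_lt (lt_of_le_of_lt (le_max_left _ _) hy1)) le_rfl
  rw [← h1, h2]

lemma countN_step (p q : 𝒵) (hpq : p ≠ q) (v m u : ℝ) (hv : 0 ≤ v) (hvm : v < m)
    (hmu : m ≤ u) (hnj : ∀ s, v < s → s ≤ u → s ≠ m → P.leftLim s = P.toFun s) :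
    P.countN p q u = P.countN p q v + (if P.leftLim m = p ∧ P.toFun m = q then 1 else 0) := by
  have hfinv : {s : ℝ | 0 < s ∧ s ≤ v ∧ P.leftLim s = p ∧ P.toFun s = q}.Finite := by
    apply (P.jumpSet_finite u).subset
    intro s hs
    exact ⟨hs.1, hs.2.1.trans (hvm.le.trans hmu), by rw [hs.2.2.1, hs.2.2.2]; exact hpq⟩
  by_cases hm : P.leftLim m = p ∧ P.toFun m = q
  · have hset : {s : ℝ | 0 < s ∧ s ≤ u ∧ P.leftLim s = p ∧ P.toFun s = q}
        = insert m {s : ℝ | 0 < s ∧ s ≤ v ∧ P.leftLim s = p ∧ P.toFun s = q} := by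
      ext s
      constructor
      · rintro ⟨h1, h2, h3, h4⟩
        rcases le_or_gt s v with h' | h'
        · exact Set.mem_insert_iff.mpr (Or.inr ⟨h1, h', h3, h4⟩)
        · left
          by_contra hsm
          have := hnj s h' h2 hsm
          rw [h3, h4] at this
          exact hpq this
      · rintro (rfl | ⟨h1, h2, h3, h4⟩)
        · exact ⟨hv.trans_lt hvm, hmu, hm.1, hm.2⟩
        · exact ⟨h1, h2.trans (hvm.le.trans hmu), h3, h4⟩
    rw [countN, countN, hset, Set.ncard_insert_of_notMem
      (fun hmem => absurd hmem.2.1 (not_le.mpr hvm)) hfinv, if_pos hm]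
  · have hset : {s : ℝ | 0 < s ∧ s ≤ u ∧ P.leftLim s = p ∧ P.toFun s = q}
        = {s : ℝ | 0 < s ∧ s ≤ v ∧ P.leftLim s = p ∧ P.toFun s = q} := by
      ext s
      constructor
      · rintro ⟨h1, h2, h3, h4⟩
        rcases le_or_gt s v with h' | h'
        · exact ⟨h1, h', h3, h4⟩
        · exfalso
          rcases eq_or_ne s m with rfl | hsm
          · exact hm ⟨h3, h4⟩
          · have := hnj s h' h2 hsm
            rw [h3, h4] at this
            exact hpq this
      · rintro ⟨h1, h2, h3, h4⟩
        exact ⟨h1, h2.trans (hvm.le.trans hmu), h3, h4⟩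
    rw [countN, countN, hset, if_neg hm, add_zero]

lemma main_base (j : 𝒵) (u : ℝ) (hu : 0 ≤ u)
    (hJ : {s : ℝ | 0 < s ∧ s ≤ u ∧ P.leftLim s ≠ P.toFun s} = ∅) :
    (if P.toFun u = j then (1 : ℝ) else 0) = (if P.toFun 0 = j then (1 : ℝ) else 0)
      + ∑ k ∈ Finset.univ.filter (fun k => k ≠ j),
          ((P.countN k j u : ℝ) - (P.countN j k u : ℝ)) := by
  have hnj : ∀ s, (0:ℝ) < s → s ≤ u → P.leftLim s = P.toFun s := by
    intro s h1 h2
    by_contra hne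
    exact absurd (Set.eq_empty_iff_forall_notMem.mp hJ s) (fun h => h ⟨h1, h2, hne⟩)
  have hconst := P.const_of_noJump 0 u le_rfl hnj u hu le_rfl
  have h0 : ∀ p q : 𝒵, p ≠ q → P.countN p q u = 0 := by
    intro p q hpq
    have hfins : {s : ℝ | 0 < s ∧ s ≤ u ∧ P.leftLim s = p ∧ P.toFun s = q}.Finite := by
      apply (P.jumpSet_finite u).subset
      intro s hs
      exact ⟨hs.1, hs.2.1, by rw [hs.2.2.1, hs.2.2.2]; exact hpq⟩
    rw [countN, Set.ncard_eq_zero hfins]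
    apply Set.eq_empty_of_forall_notMem
    intro s hs
    have h := hnj s hs.1 hs.2.1
    rw [hs.2.2.1, hs.2.2.2] at h
    exact hpq h
  rw [hconst]
  rw [Finset.sum_congr rfl (fun k hk => by
    rw [h0 k j (Finset.mem_filter.mp hk).2, h0 j k (Ne.symm (Finset.mem_filter.mp hk).2)])]
  simp

lemma sum_jump (j : 𝒵) (m : ℝ) (hjm : P.leftLim m ≠ P.toFun m) :
    (∑ k ∈ Finset.univ.filter (fun k => k ≠ j),
      ((if P.leftLim m = k ∧ P.toFun m = j then (1:ℝ) else 0)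
        - (if P.leftLim m = j ∧ P.toFun m = k then (1:ℝ) else 0)))
    = (if P.toFun m = j then (1:ℝ) else 0) - (if P.leftLim m = j then (1:ℝ) else 0) := by
  rw [Finset.sum_sub_distrib]
  by_cases hb : P.toFun m = j
  · have ha : P.leftLim m ≠ j := fun h => hjm (h.trans hb.symm)
    have h1 : (∑ k ∈ Finset.univ.filter (fun k => k ≠ j),
        (if P.leftLim m = k ∧ P.toFun m = j then (1:ℝ) else 0)) = 1 := by
      simp only [hb, and_true]
      rw [Finset.sum_ite_eq]
      simp [Finset.mem_filter, ha]
    have h2 : (∑ k ∈ Finset.univ.filter (fun k => k ≠ j),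
        (if P.leftLim m = j ∧ P.toFun m = k then (1:ℝ) else 0)) = 0 := by
      apply Finset.sum_eq_zero
      intro k hk
      rw [if_neg (fun h => ha h.1)]
    rw [h1, h2, if_pos hb, if_neg ha]
  · have h1 : (∑ k ∈ Finset.univ.filter (fun k => k ≠ j),
        (if P.leftLim m = k ∧ P.toFun m = j then (1:ℝ) else 0)) = 0 := by
      apply Finset.sum_eq_zero
      intro k hk
      rw [if_neg (fun h => hb h.2)]
    by_cases ha : P.leftLim m = j
    · have hbj : P.toFun m ≠ j := hb
      have h2 : (∑ k ∈ Finset.univ.filter (fun k => k ≠ j),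
          (if P.leftLim m = j ∧ P.toFun m = k then (1:ℝ) else 0)) = 1 := by
        simp only [ha, true_and]
        rw [Finset.sum_ite_eq]
        simp [Finset.mem_filter, hbj]
      rw [h1, h2, if_neg hb, if_pos ha]
    · have h2 : (∑ k ∈ Finset.univ.filter (fun k => k ≠ j),
          (if P.leftLim m = j ∧ P.toFun m = k then (1:ℝ) else 0)) = 0 := by
        apply Finset.sum_eq_zero
        intro k hk
        rw [if_neg (fun h => ha h.1)]
      rw [h1, h2, if_neg hb, if_neg ha]

lemma main_aux (j : 𝒵) : ∀ (n : ℕ) (u : ℝ), 0 ≤ u →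
    {s : ℝ | 0 < s ∧ s ≤ u ∧ P.leftLim s ≠ P.toFun s}.ncard ≤ n →
    (if P.toFun u = j then (1 : ℝ) else 0) = (if P.toFun 0 = j then (1 : ℝ) else 0)
      + ∑ k ∈ Finset.univ.filter (fun k => k ≠ j),
          ((P.countN k j u : ℝ) - (P.countN j k u : ℝ)) := by
  intro n
  induction n with
  | zero =>
    intro u hu hcard
    apply P.main_base j u hu
    exact ((Set.ncard_eq_zero (P.jumpSet_finite u)).mp (Nat.le_zero.mp hcard))
  | succ n ih =>
    intro u hu hcard
    by_cases hJ : {s : ℝ | 0 < s ∧ s ≤ u ∧ P.leftLim s ≠ P.toFun s} = ∅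
    · exact P.main_base j u hu hJ
    · have hfin : {s : ℝ | 0 < s ∧ s ≤ u ∧ P.leftLim s ≠ P.toFun s}.Finite :=
        P.jumpSet_finite u
      obtain ⟨m, hmJ, hmax⟩ :=
        Set.exists_max_image _ id hfin (Set.nonempty_iff_ne_empty.mpr hJ)
      obtain ⟨hm0, hmu, hjm⟩ := hmJ
      obtain ⟨v, hv0, hvm, hvmax⟩ : ∃ v, 0 ≤ v ∧ v < m ∧
          ∀ s, (0 < s ∧ s ≤ u ∧ P.leftLim s ≠ P.toFun s) → s ≠ m → s ≤ v := by
        by_cases hE : ({s : ℝ | 0 < s ∧ s ≤ u ∧ P.leftLim s ≠ P.toFun s} \ {m}).Nonempty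
        · obtain ⟨v, hvJ, hvmax⟩ :=
            Set.exists_max_image _ id (hfin.subset Set.diff_subset) hE
          refine ⟨v, hvJ.1.1.le, lt_of_le_of_ne (hmax v hvJ.1) hvJ.2, ?_⟩
          intro s hs hsm
          exact hvmax s ⟨hs, hsm⟩
        · refine ⟨0, le_rfl, hm0, fun s hs hsm => absurd ⟨s, hs, hsm⟩ hE⟩
      have hnj : ∀ s, v < s → s ≤ u → s ≠ m → P.leftLim s = P.toFun s := by
        intro s h1 h2 h3
        by_contra hne
        exact absurd (hvmax s ⟨hv0.trans_lt h1, h2, hne⟩ h3) (not_le.mpr h1)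
      have htu : P.toFun u = P.toFun m :=
        P.const_of_noJump m u hm0.le
          (fun s hs hsu => hnj s (hvm.trans hs) hsu (ne_of_gt hs)) u hmu le_rfl
      have hll : P.leftLim m = P.toFun v :=
        P.leftLim_eq_of_noJump v m hv0 hvm
          (fun s h1 h2 => hnj s h1 (h2.le.trans hmu) (ne_of_lt h2))
      have hcardv : {s : ℝ | 0 < s ∧ s ≤ v ∧ P.leftLim s ≠ P.toFun s}.ncard ≤ n := by
        have hss : {s : ℝ | 0 < s ∧ s ≤ v ∧ P.leftLim s ≠ P.toFun s}
            ⊂ {s : ℝ | 0 < s ∧ s ≤ u ∧ P.leftLim s ≠ P.toFun s} := by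
          constructor
          · intro s hs
            exact ⟨hs.1, hs.2.1.trans (hvm.le.trans hmu), hs.2.2⟩
          · intro hsub
            have := hsub ⟨hm0, hmu, hjm⟩
            exact absurd this.2.1 (not_le.mpr hvm)
        have := Set.ncard_lt_ncard hss hfin
        omega
      have hIH := ih v hv0 hcardv
      have hsum : (∑ k ∈ Finset.univ.filter (fun k => k ≠ j),
            ((P.countN k j u : ℝ) - (P.countN j k u : ℝ)))
          = (∑ k ∈ Finset.univ.filter (fun k => k ≠ j),
            ((P.countN k j v : ℝ) - (P.countN j k v : ℝ)))
            + ((if P.toFun m = j then (1:ℝ) else 0)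
              - (if P.leftLim m = j then (1:ℝ) else 0)) := by
        rw [← P.sum_jump j m hjm, ← Finset.sum_add_distrib]
        apply Finset.sum_congr rfl
        intro k hk
        have hkj : k ≠ j := (Finset.mem_filter.mp hk).2
        rw [P.countN_step k j hkj v m u hv0 hvm hmu hnj,
          P.countN_step j k hkj.symm v m u hv0 hvm hmu hnj]
        push_cast
        ring
      rw [hsum]
      simp only [htu, hll]
      rw [hIH]
      ring

end JumpPath

/-- Censored sojourn–transition identity:
`1{Z(t)=j}·1{t<R} = 1{Z(0)=j} − 1{R≤t}·1{Z(R)=j} + Σ_{k≠j} (N_{kj}(t∧R) − N_{jk}(t∧R))`. -/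
theorem censored_sojourn_transition_identity {𝒵 : Type*} [Fintype 𝒵] [DecidableEq 𝒵]
    (P : JumpPath 𝒵) (R : ℝ) (hR : 0 < R) (t : ℝ) (ht : 0 ≤ t) (j : 𝒵) :
    (if P.toFun t = j then (1 : ℝ) else 0) * (if t < R then (1 : ℝ) else 0)
      = (if P.toFun 0 = j then (1 : ℝ) else 0)
        - (if R ≤ t then (1 : ℝ) else 0) * (if P.toFun R = j then (1 : ℝ) else 0)
        + ∑ k ∈ Finset.univ.filter (fun k => k ≠ j),
            ((P.countN k j (min t R) : ℝ) - (P.countN j k (min t R) : ℝ)) := by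
  rcases lt_or_ge t R with h | h
  · rw [min_eq_left h.le, if_pos h, if_neg (not_le.mpr h)]
    have := P.main_aux j _ t ht le_rfl
    rw [this]
    ring
  · rw [min_eq_right h, if_neg (not_lt.mpr h), if_pos h]
    have := P.main_aux j _ R hR.le le_rfl
    rw [this]
    ring
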